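/- Let a, b > 0, γ ∈ (0,1], γ' ∈ (1−γ,1], ρ ∈ (0,1]. Let A be an n×n matrix with entries in [0,1] with A_{ij} ≤ a/n for all i,j, such that each row of A has at least γn entries ≥ ρ/n and each column has at least γ'n entries ≥ ρ/n. Let B = XAY for positive diagonal X, Y, standardized (all row sums 1 or all column sums 1), with B_{ij} ≤ b/n for all i,j, and α(B) < 1 − 1/(γ+γ'). Then for all i,j: B_{ij} ≤ δ·A_{ij}, where δ = a·b² / (ρ²·((γ+γ')(1 − α(B)) − 1)). -/

import Mathlib

open Finset Matrix

/-- Row sum of a matrix. -/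
def rsum {m n : ℕ} (A : Matrix (Fin m) (Fin n) ℝ) (i : Fin m) : ℝ := ∑ j, A i j

/-- Column sum of a matrix. -/
def csum {m n : ℕ} (A : Matrix (Fin m) (Fin n) ℝ) (j : Fin n) : ℝ := ∑ i, A i j

set_option maxHeartbeats 1000000 in
lemma key (n : ℕ) (hn : 0 < n) (a b γ γ' ρ : ℝ)
    (ha : 0 < a) (hb : 0 < b) (hγγ' : 1 < γ + γ') (hρ : 0 < ρ)
    (A : Matrix (Fin n) (Fin n) ℝ)
    (hA0 : ∀ i j, 0 ≤ A i j)
    (hAub : ∀ i j, A i j ≤ a / n)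
    (hrowdense : ∀ i, γ * n ≤
      ((Finset.univ.filter (fun j => ρ / n ≤ A i j)).card : ℝ))
    (hcoldense : ∀ j, γ' * n ≤
      ((Finset.univ.filter (fun i => ρ / n ≤ A i j)).card : ℝ))
    (X Y : Fin n → ℝ) (hX : ∀ i, 0 < X i) (hY : ∀ j, 0 < Y j)
    (B : Matrix (Fin n) (Fin n) ℝ)
    (hXAY : ∀ i j, B i j = X i * A i j * Y j)
    (hBub : ∀ i j, B i j ≤ b / n)
    (αB : ℝ)
    (hrs : ∀ i, rsum B i = 1)
    (hαdef : αB = (1 / n) * ∑ j, |csum B j - 1|)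
    (hα : αB < 1 - 1 / (γ + γ')) :
    ∀ i j, B i j ≤ (a * b ^ 2 / (ρ ^ 2 * ((γ + γ') * (1 - αB) - 1))) * A i j := by
  intro i j
  have hnR : (0:ℝ) < n := by exact_mod_cast hn
  set S : Finset (Fin n) := univ.filter (fun k => ρ / n ≤ A i k) with hSdef
  set T : Finset (Fin n) := univ.filter (fun l => ρ / n ≤ A l j) with hTdef
  have hB0 : ∀ l k, 0 ≤ B l k := fun l k => by
    rw [hXAY]; exact mul_nonneg (mul_nonneg (hX l).le (hA0 l k)) (hY k).le
  have hα0 : 0 ≤ αB := by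
    rw [hαdef]
    have : 0 ≤ ∑ j, |csum B j - 1| := Finset.sum_nonneg fun j _ => abs_nonneg _
    positivity
  set D : ℝ := (γ + γ') * (1 - αB) - 1 with hDdef
  have hγγ'0 : (0:ℝ) < γ + γ' := by linarith
  have hD : 0 < D := by
    have h1 : 1 / (γ + γ') * (γ + γ') = 1 := by field_simp
    nlinarith [mul_lt_mul_of_pos_right hα hγγ'0]
  -- cardinality facts
  have hScard : γ * n ≤ (S.card : ℝ) := hrowdense i
  have hTcard : γ' * n ≤ (T.card : ℝ) := hcoldense j
  have hScard_leN : S.card ≤ n := by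
    simpa using Finset.card_le_univ S
  have hTcard_leN : T.card ≤ n := by
    simpa using Finset.card_le_univ T
  have hScard_le : (S.card : ℝ) ≤ n := by exact_mod_cast hScard_leN
  have hTcard_le : (T.card : ℝ) ≤ n := by exact_mod_cast hTcard_leN
  set M : ℝ := ∑ l ∈ T, ∑ k ∈ S, B l k with hMdef
  have hMeq : M = (T.card : ℝ) - ∑ l ∈ T, ∑ k ∈ Sᶜ, B l k := by
    have hrow : ∀ l, ∑ k ∈ S, B l k = 1 - ∑ k ∈ Sᶜ, B l k := by
      intro l
      have h1 := Finset.sum_add_sum_compl S (fun k => B l k)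
      have h2 : ∑ k, B l k = 1 := hrs l
      linarith
    rw [hMdef, Finset.sum_congr rfl (fun l _ => hrow l), Finset.sum_sub_distrib]
    simp
  have hcomm : ∑ l ∈ T, ∑ k ∈ Sᶜ, B l k ≤ ∑ k ∈ Sᶜ, csum B k := by
    have h1 : ∑ l ∈ T, ∑ k ∈ Sᶜ, B l k ≤ ∑ l, ∑ k ∈ Sᶜ, B l k :=
      Finset.sum_le_sum_of_subset_of_nonneg (Finset.subset_univ T)
        (fun l _ _ => Finset.sum_nonneg fun k _ => hB0 l k)
    calc ∑ l ∈ T, ∑ k ∈ Sᶜ, B l k ≤ ∑ l, ∑ k ∈ Sᶜ, B l k := h1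
      _ = ∑ k ∈ Sᶜ, ∑ l, B l k := Finset.sum_comm
      _ = ∑ k ∈ Sᶜ, csum B k := rfl
  have hcsum_bound : ∑ k ∈ Sᶜ, csum B k ≤ ((n:ℝ) - S.card) + n * αB := by
    have h2 : ∑ k ∈ Sᶜ, csum B k ≤ ∑ k ∈ Sᶜ, (1 + |csum B k - 1|) :=
      Finset.sum_le_sum fun k _ => by
        have := le_abs_self (csum B k - 1); linarith
    have h3 : ∑ k ∈ Sᶜ, (1 + |csum B k - 1|)
        = (Sᶜ.card : ℝ) + ∑ k ∈ Sᶜ, |csum B k - 1| := by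
      rw [Finset.sum_add_distrib]; simp
    have h4 : ∑ k ∈ Sᶜ, |csum B k - 1| ≤ ∑ k, |csum B k - 1| :=
      Finset.sum_le_sum_of_subset_of_nonneg (Finset.subset_univ _)
        (fun k _ _ => abs_nonneg _)
    have h5 : ∑ k, |csum B k - 1| = n * αB := by
      rw [hαdef]; field_simp
    have h6 : (Sᶜ.card : ℝ) = (n:ℝ) - S.card := by
      rw [Finset.card_compl, Fintype.card_fin, Nat.cast_sub hScard_leN]
    linarith
  have hM_lb : (n:ℝ) * D ≤ M := by
    have hDE : D ≤ γ + γ' - 1 - αB := by nlinarith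
    nlinarith [hcomm, hcsum_bound, hScard, hTcard, hMeq]
  have hMpos : 0 < M := lt_of_lt_of_le (by positivity) hM_lb
  have hTne : T.Nonempty :=
    Finset.nonempty_of_sum_ne_zero (f := fun l => ∑ k ∈ S, B l k)
      (by rw [← hMdef]; exact hMpos.ne')
  have hSne : S.Nonempty := by
    have hM' : M = ∑ k ∈ S, ∑ l ∈ T, B l k := by rw [hMdef, Finset.sum_comm]
    exact Finset.nonempty_of_sum_ne_zero (f := fun k => ∑ l ∈ T, B l k)
      (by rw [← hM']; exact hMpos.ne')
  have hTc : (0:ℝ) < T.card := by exact_mod_cast Finset.card_pos.2 hTne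
  have hSc : (0:ℝ) < S.card := by exact_mod_cast Finset.card_pos.2 hSne
  have hsum_const : ∑ _p ∈ T ×ˢ S, (M / ((T.card:ℝ) * S.card)) = M := by
    rw [Finset.sum_const, Finset.card_product, nsmul_eq_mul]
    push_cast
    field_simp
  have hsumB : ∑ p ∈ T ×ˢ S, B p.1 p.2 = M := by
    rw [Finset.sum_product]
  obtain ⟨p, hp, hple⟩ := Finset.exists_le_of_sum_le
    (f := fun _ => M / ((T.card:ℝ) * S.card)) (g := fun p => B p.1 p.2)
    (hTne.product hSne) (le_of_le_of_eq (le_of_eq hsum_const) hsumB.symm)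
  obtain ⟨hpT, hpS⟩ := Finset.mem_product.mp hp
  have hkS : ρ / n ≤ A i p.2 := (Finset.mem_filter.mp hpS).2
  have hlT : ρ / n ≤ A p.1 j := (Finset.mem_filter.mp hpT).2
  have hchain : D / n ≤ M / ((T.card:ℝ) * S.card) := by
    rw [div_le_div_iff₀ hnR (by positivity)]
    have h1 : (T.card:ℝ) * S.card ≤ n * n :=
      mul_le_mul hTcard_le hScard_le hSc.le hnR.le
    calc D * ((T.card:ℝ) * S.card) ≤ D * ((n:ℝ) * n) :=
          mul_le_mul_of_nonneg_left h1 hD.le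
      _ = ((n:ℝ) * D) * n := by ring
      _ ≤ M * n := mul_le_mul_of_nonneg_right hM_lb hnR.le
  have hBlk : D / n ≤ B p.1 p.2 := le_trans hchain hple
  -- scaling bounds
  have hXiYk : X i * Y p.2 ≤ b / ρ := by
    have h3 : X i * (ρ / n) * Y p.2 ≤ B i p.2 := by
      rw [hXAY]
      exact mul_le_mul_of_nonneg_right
        (mul_le_mul_of_nonneg_left hkS (hX i).le) (hY p.2).le
    have h5 : (X i * Y p.2 * ρ) / n ≤ b / n := by
      calc (X i * Y p.2 * ρ) / n = X i * (ρ / n) * Y p.2 := by ring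
        _ ≤ B i p.2 := h3
        _ ≤ b / n := hBub i p.2
    have h6 : X i * Y p.2 * ρ ≤ b := (div_le_div_iff_of_pos_right hnR).mp h5
    exact (le_div_iff₀ hρ).mpr h6
  have hXlYj : X p.1 * Y j ≤ b / ρ := by
    have h3 : X p.1 * (ρ / n) * Y j ≤ B p.1 j := by
      rw [hXAY]
      exact mul_le_mul_of_nonneg_right
        (mul_le_mul_of_nonneg_left hlT (hX p.1).le) (hY j).le
    have h5 : (X p.1 * Y j * ρ) / n ≤ b / n := by
      calc (X p.1 * Y j * ρ) / n = X p.1 * (ρ / n) * Y j := by ring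
        _ ≤ B p.1 j := h3
        _ ≤ b / n := hBub p.1 j
    have h6 : X p.1 * Y j * ρ ≤ b := (div_le_div_iff_of_pos_right hnR).mp h5
    exact (le_div_iff₀ hρ).mpr h6
  have hXlYk : D / a ≤ X p.1 * Y p.2 := by
    have h3 : B p.1 p.2 ≤ X p.1 * (a / n) * Y p.2 := by
      rw [hXAY]
      exact mul_le_mul_of_nonneg_right
        (mul_le_mul_of_nonneg_left (hAub p.1 p.2) (hX p.1).le) (hY p.2).le
    have h5 : D / n ≤ (X p.1 * Y p.2 * a) / n := by
      calc D / n ≤ B p.1 p.2 := hBlk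
        _ ≤ X p.1 * (a / n) * Y p.2 := h3
        _ = (X p.1 * Y p.2 * a) / n := by ring
    have h6 : D ≤ X p.1 * Y p.2 * a := (div_le_div_iff_of_pos_right hnR).mp h5
    exact (div_le_iff₀ ha).mpr h6
  have hfin : X i * Y j ≤ a * b ^ 2 / (ρ ^ 2 * D) := by
    have h1 : (X i * Y j) * (X p.1 * Y p.2) ≤ (b/ρ) * (b/ρ) := by
      have h := mul_le_mul hXiYk hXlYj (mul_pos (hX p.1) (hY j)).le
        (by positivity)
      calc (X i * Y j) * (X p.1 * Y p.2) = (X i * Y p.2) * (X p.1 * Y j) := by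
            ring
        _ ≤ (b/ρ) * (b/ρ) := h
    have h2 : (X i * Y j) * (D / a) ≤ (b/ρ) * (b/ρ) :=
      le_trans (mul_le_mul_of_nonneg_left hXlYk
        (mul_pos (hX i) (hY j)).le) h1
    have h3 : X i * Y j ≤ ((b/ρ) * (b/ρ)) / (D/a) :=
      (le_div_iff₀ (by positivity)).mpr h2
    have h4 : ((b/ρ) * (b/ρ)) / (D/a) = a * b ^ 2 / (ρ ^ 2 * D) := by
      field_simp
    rwa [h4] at h3
  calc B i j = (X i * Y j) * A i j := by rw [hXAY]; ring
    _ ≤ (a * b ^ 2 / (ρ ^ 2 * D)) * A i j :=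
      mul_le_mul_of_nonneg_right hfin (hA0 i j)

theorem stmt7 (n : ℕ) (hn : 0 < n) (a b γ γ' ρ : ℝ)
    (ha : 0 < a) (hb : 0 < b)
    (hγ : γ ∈ Set.Ioc (0 : ℝ) 1) (hγ' : γ' ∈ Set.Ioc (1 - γ) 1)
    (hρ : ρ ∈ Set.Ioc (0 : ℝ) 1)
    (A : Matrix (Fin n) (Fin n) ℝ)
    (hArange : ∀ i j, A i j ∈ Set.Icc (0 : ℝ) 1)
    (hAub : ∀ i j, A i j ≤ a / n)
    (hrowdense : ∀ i, γ * n ≤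
      ((Finset.univ.filter (fun j => ρ / n ≤ A i j)).card : ℝ))
    (hcoldense : ∀ j, γ' * n ≤
      ((Finset.univ.filter (fun i => ρ / n ≤ A i j)).card : ℝ))
    (X Y : Fin n → ℝ) (hX : ∀ i, 0 < X i) (hY : ∀ j, 0 < Y j)
    (B : Matrix (Fin n) (Fin n) ℝ)
    (hXAY : ∀ i j, B i j = X i * A i j * Y j)
    (hBub : ∀ i j, B i j ≤ b / n)
    (αB : ℝ)
    (hstd : ((∀ i, rsum B i = 1) ∧ αB = (1 / n) * ∑ j, |csum B j - 1|) ∨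
            ((∀ j, csum B j = 1) ∧ αB = (1 / n) * ∑ i, |rsum B i - 1|))
    (hα : αB < 1 - 1 / (γ + γ')) :
    ∀ i j, B i j ≤ (a * b ^ 2 / (ρ ^ 2 * ((γ + γ') * (1 - αB) - 1))) * A i j := by
  have hγγ' : (1:ℝ) < γ + γ' := by
    have := hγ'.1; linarith
  rcases hstd with ⟨hrs, hαdef⟩ | ⟨hcs, hαdef⟩
  · exact key n hn a b γ γ' ρ ha hb hγγ' hρ.1 A (fun i j => (hArange i j).1)
      hAub hrowdense hcoldense X Y hX hY B hXAY hBub αB hrs hαdef hα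
  · have hkey := key n hn a b γ' γ ρ ha hb (by linarith) hρ.1
      Aᵀ (fun i j => (hArange j i).1) (fun i j => hAub j i)
      (fun i => by exact hcoldense i)
      (fun j => by exact hrowdense j)
      Y X hY hX
      Bᵀ (fun i j => by simp only [transpose_apply]; rw [hXAY]; ring)
      (fun i j => by simpa using hBub j i)
      αB
      (fun i => by
        simp only [rsum, transpose_apply]
        exact hcs i)
      (by
        simp only [csum, transpose_apply]
        exact hαdef)
      (by rwa [add_comm γ' γ])
    intro i j
    have h := hkey j i
    simp only [transpose_apply] at h
    rwa [add_comm γ' γ] at h
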